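/- Let P ∈ ℝ^{U×L}, f ∈ ℝ^{U}, s ∈ ℝ^{U} and δ ∈ ℝ^{U}. Set S = Pᵀdiag(f∘s)P and S′ = Pᵀdiag(f∘(s+δ))P, where f∘s denotes the entrywise product of vectors, and let M = P S⁻¹ Pᵀ. If S is positive definite and S′ is positive semidefinite, then ‖S^{-1/2}·S′·S^{-1/2} − I‖_F² = δᵀ ((ffᵀ) ∘ M^{∘2}) δ. -/

import Mathlib

open Matrix

section

open scoped ComplexOrder

/-- The square root of a positive semidefinite matrix, as defined in Mathlib (Dec 2024). -/
noncomputable def Matrix.PosSemidef.sqrt {n 𝕜 : Type*} [Fintype n] [DecidableEq n] [RCLike 𝕜]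
    {A : Matrix n n 𝕜} (hA : A.PosSemidef) : Matrix n n 𝕜 :=
  hA.1.eigenvectorUnitary.1 * diagonal ((↑) ∘ (Real.sqrt ·) ∘ hA.1.eigenvalues) *
    (star hA.1.eigenvectorUnitary : Matrix n n 𝕜)

end

theorem stmt_5_sqrt_mul_self {L : ℕ} {A : Matrix (Fin L) (Fin L) ℝ} (hA : A.PosSemidef) :
    hA.sqrt * hA.sqrt = A := by
  unfold Matrix.PosSemidef.sqrt
  calc _ = (hA.1.eigenvectorUnitary : Matrix (Fin L) (Fin L) ℝ) *
        (diagonal ((RCLike.ofReal : ℝ → ℝ) ∘ (Real.sqrt ·) ∘ hA.1.eigenvalues) *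
          ((star hA.1.eigenvectorUnitary : Matrix (Fin L) (Fin L) ℝ) *
            (hA.1.eigenvectorUnitary : Matrix (Fin L) (Fin L) ℝ)) *
        diagonal ((RCLike.ofReal : ℝ → ℝ) ∘ (Real.sqrt ·) ∘ hA.1.eigenvalues)) *
        (star hA.1.eigenvectorUnitary : Matrix (Fin L) (Fin L) ℝ) := by
          simp only [Matrix.mul_assoc]
    _ = (hA.1.eigenvectorUnitary : Matrix (Fin L) (Fin L) ℝ) *
        diagonal (RCLike.ofReal ∘ hA.1.eigenvalues) *
        (star hA.1.eigenvectorUnitary : Matrix (Fin L) (Fin L) ℝ) := by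
          rw [Unitary.coe_star_mul_self, Matrix.mul_one, diagonal_mul_diagonal]
          congr 2
          exact congrArg diagonal (funext fun i => by
            simp [Real.mul_self_sqrt (hA.eigenvalues_nonneg i)])
    _ = A := by
          conv_rhs => rw [hA.1.spectral_theorem]
          simp

theorem stmt_5_sqrt_isHermitian {L : ℕ} {A : Matrix (Fin L) (Fin L) ℝ} (hA : A.PosSemidef) :
    hA.sqrt.IsHermitian := by
  unfold Matrix.PosSemidef.sqrt
  simp [Matrix.IsHermitian, conjTranspose_mul, Matrix.mul_assoc, Matrix.star_eq_conjTranspose,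
    conjTranspose_eq_transpose_of_trivial]

theorem stmt_5 {U L : ℕ} (P : Matrix (Fin U) (Fin L) ℝ) (f s δ : Fin U → ℝ)
    (S S' : Matrix (Fin L) (Fin L) ℝ)
    (hS : S = Pᵀ * Matrix.diagonal (f * s) * P)
    (hS' : S' = Pᵀ * Matrix.diagonal (f * (s + δ)) * P)
    (M : Matrix (Fin U) (Fin U) ℝ) (hM : M = P * S⁻¹ * Pᵀ)
    (hSpd : S.PosDef) (hS'psd : S'.PosSemidef) :
    ∑ i, ∑ j, (((hSpd.posSemidef.sqrt)⁻¹ * S' * (hSpd.posSemidef.sqrt)⁻¹ - 1) i j) ^ 2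
      = δ ⬝ᵥ ((Matrix.vecMulVec f f ⊙ (M ⊙ M)).mulVec δ) := by
  set R := hSpd.posSemidef.sqrt with hR
  have hRR : R * R = S := stmt_5_sqrt_mul_self hSpd.posSemidef
  have hSdet : IsUnit S.det := (Matrix.isUnit_iff_isUnit_det S).mp hSpd.isUnit
  have hRdet : IsUnit R.det := by
    have : R.det * R.det = S.det := by rw [← det_mul, hRR]
    exact isUnit_of_mul_isUnit_left (this ▸ hSdet)
  have hRinv : R⁻¹ * R = 1 := nonsing_inv_mul R hRdet
  have hRinv' : R * R⁻¹ = 1 := mul_nonsing_inv R hRdet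
  have hSsym : Sᵀ = S := hSpd.isHermitian.eq
  have hSinvsym : S⁻¹ᵀ = S⁻¹ := by rw [transpose_nonsing_inv, hSsym]
  have hMsym : Mᵀ = M := by rw [hM]; simp [Matrix.transpose_mul, hSinvsym, Matrix.mul_assoc]
  have hRsym : Rᵀ = R := (stmt_5_sqrt_isHermitian hSpd.posSemidef).eq
  have hRinvsym : R⁻¹ᵀ = R⁻¹ := by rw [transpose_nonsing_inv, hRsym]
  have hSinv : S⁻¹ = R⁻¹ * R⁻¹ := by rw [← hRR, Matrix.mul_inv_rev]
  set D := Matrix.diagonal (f * δ) with hD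
  have hdiff : S' - S = Pᵀ * D * P := by
    rw [hS, hS']
    have h : f * (s + δ) = f * s + f * δ := by ring
    have hdiag : Matrix.diagonal (f * s + f * δ)
        = Matrix.diagonal (f * s) + Matrix.diagonal (f * δ) := by
      ext i j; by_cases hij : i = j <;> simp [hij]
    rw [h, hdiag, Matrix.mul_add, Matrix.add_mul]
    abel
  set B := Pᵀ * D * P with hB
  have hA : R⁻¹ * S' * R⁻¹ - 1 = R⁻¹ * B * R⁻¹ := by
    have h : S' = S + B := by rw [← hdiff]; abel
    rw [h, Matrix.mul_add, Matrix.add_mul, ← hRR]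
    rw [show R⁻¹ * (R * R) * R⁻¹ = (R⁻¹ * R) * (R * R⁻¹) by noncomm_ring]
    rw [hRinv, hRinv', one_mul]
    abel
  set A := R⁻¹ * B * R⁻¹ with hAdef
  have hAsym : Aᵀ = A := by
    rw [hAdef, hB, hD]
    simp [Matrix.transpose_mul, hRinvsym, diagonal_transpose, Matrix.mul_assoc]
  have hLHS : ∑ i, ∑ j, (A i j) ^ 2 = (A * A).trace := by
    rw [Matrix.trace]
    refine Finset.sum_congr rfl fun i _ => ?_
    rw [Matrix.diag, Matrix.mul_apply]
    refine Finset.sum_congr rfl fun j _ => ?_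
    have h : A j i = A i j := by conv_lhs => rw [← hAsym, transpose_apply]
    rw [h]; ring
  have htr : (A * A).trace = (D * M * (D * M)).trace := by
    have h1 : A * A = R⁻¹ * (B * S⁻¹ * B * R⁻¹) := by
      rw [hAdef, hSinv]; noncomm_ring
    rw [h1, Matrix.trace_mul_comm]
    have h2 : B * S⁻¹ * B * R⁻¹ * R⁻¹ = B * S⁻¹ * (B * S⁻¹) := by
      rw [hSinv]; noncomm_ring
    rw [h2, hB]
    have h3 : Pᵀ * D * P * S⁻¹ * (Pᵀ * D * P * S⁻¹)
        = Pᵀ * (D * P * S⁻¹ * (Pᵀ * D * P * S⁻¹)) := by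
      simp only [Matrix.mul_assoc]
    rw [h3, Matrix.trace_mul_comm, hM]
    congr 1
    simp only [Matrix.mul_assoc]
  rw [hA, hLHS, htr]
  set N := D * M with hN
  have hNe : ∀ i j, N i j = f i * δ i * M i j := fun i j => by
    rw [hN, hD, Matrix.diagonal_mul, Pi.mul_apply]
  rw [Matrix.trace]
  simp only [Matrix.diag_apply, Matrix.mul_apply, hNe, Matrix.mulVec, dotProduct,
    Matrix.hadamard_apply, Matrix.vecMulVec_apply, Finset.mul_sum]
  refine Finset.sum_congr rfl fun i _ => Finset.sum_congr rfl fun j _ => ?_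
  have h : M j i = M i j := by conv_lhs => rw [← hMsym, transpose_apply]
  rw [h]; ring
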